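/- Let V be a finite nonempty set and define the polytope P₂ = {(x, y, w) ∈ (V → ℝ) × ℝ × ℝ : x_v ≤ y for every v ∈ V, w − ∑_{v∈V} x_v + y ≤ 0, 0 ≤ x_v ≤ 1 for every v ∈ V, 0 ≤ y ≤ 1, and w ≥ 0}. Then every extreme point (x, y, w) of P₂ is integral: x_v ∈ {0,1} for every v ∈ V, y ∈ {0,1}, and w is a (nonnegative) integer. -/

import Mathlib

set_option maxHeartbeats 3200000 in
/-- every extreme point `(x, y, w)` of the polytope
`P₂ = {(x, y, w) : x v ≤ y, w − ∑ x v + y ≤ 0, 0 ≤ x v ≤ 1, 0 ≤ y ≤ 1, w ≥ 0}` is integral. -/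
theorem P2_extreme_points_integral (V : Type*) [Fintype V] [Nonempty V]
    (p : (V → ℝ) × ℝ × ℝ)
    (hp : p ∈ Set.extremePoints ℝ
      {q : (V → ℝ) × ℝ × ℝ | (∀ v, q.1 v ≤ q.2.1) ∧
        q.2.2 - (∑ v, q.1 v) + q.2.1 ≤ 0 ∧
        (∀ v, 0 ≤ q.1 v ∧ q.1 v ≤ 1) ∧ (0 ≤ q.2.1 ∧ q.2.1 ≤ 1) ∧ 0 ≤ q.2.2}) :
    (∀ v, p.1 v = 0 ∨ p.1 v = 1) ∧ (p.2.1 = 0 ∨ p.2.1 = 1) ∧ ∃ k : ℕ, p.2.2 = (k : ℝ) := by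
  classical
  set K : Set ((V → ℝ) × ℝ × ℝ) :=
    {q : (V → ℝ) × ℝ × ℝ | (∀ v, q.1 v ≤ q.2.1) ∧
        q.2.2 - (∑ v, q.1 v) + q.2.1 ≤ 0 ∧
        (∀ v, 0 ≤ q.1 v ∧ q.1 v ≤ 1) ∧ (0 ≤ q.2.1 ∧ q.2.1 ≤ 1) ∧ 0 ≤ q.2.2} with hKdef
  obtain ⟨x, y, w⟩ := p
  obtain ⟨hpK, hExt⟩ := hp
  have memK : ∀ (x' : V → ℝ) (y' w' : ℝ), (∀ v, x' v ≤ y') →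
      (w' - (∑ v, x' v) + y' ≤ 0) → (∀ v, 0 ≤ x' v ∧ x' v ≤ 1) →
      0 ≤ y' → y' ≤ 1 → 0 ≤ w' → ((x', y', w') : (V → ℝ) × ℝ × ℝ) ∈ K :=
    fun x' y' w' h1 h2 h3 h4 h5 h6 => by rw [hKdef]; exact ⟨h1, h2, h3, ⟨h4, h5⟩, h6⟩
  rw [hKdef] at hpK
  obtain ⟨hA', hB', hC', ⟨hy0', hy1'⟩, hw0'⟩ := hpK
  have hA : ∀ v, x v ≤ y := hA'
  have hB : w - (∑ v, x v) + y ≤ 0 := hB'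
  have hC : ∀ v, 0 ≤ x v ∧ x v ≤ 1 := hC'
  have hy0 : 0 ≤ y := hy0'
  have hy1 : y ≤ 1 := hy1'
  have hw0 : 0 ≤ w := hw0'
  have key : ∀ d : (V → ℝ) × ℝ × ℝ, (x, y, w) + d ∈ K → (x, y, w) - d ∈ K → d = 0 := by
    intro d h1 h2
    have hseg : ((x, y, w) : (V → ℝ) × ℝ × ℝ) ∈ openSegment ℝ ((x, y, w) - d) ((x, y, w) + d) :=
      ⟨1/2, 1/2, by norm_num, by norm_num, by norm_num, by module⟩
    have h := hExt h1 h2 (by rw [openSegment_symm]; exact hseg)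
    exact add_eq_left.mp h
  have key3 : ∀ (d1 : V → ℝ) (d2 d3 : ℝ),
      ((fun j => x j + d1 j, y + d2, w + d3) : (V → ℝ) × ℝ × ℝ) ∈ K →
      ((fun j => x j + -d1 j, y + -d2, w + -d3) : (V → ℝ) × ℝ × ℝ) ∈ K →
      (∀ j, d1 j = 0) ∧ d2 = 0 ∧ d3 = 0 := by
    intro d1 d2 d3 h1 h2
    have e : ((x, y, w) : (V → ℝ) × ℝ × ℝ) - (d1, d2, d3)
        = ((fun j => x j + -d1 j, y + -d2, w + -d3) : (V → ℝ) × ℝ × ℝ) := by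
      exact Prod.ext (funext fun j => sub_eq_add_neg _ _)
        (Prod.ext (sub_eq_add_neg _ _) (sub_eq_add_neg _ _))
    have h := key (d1, d2, d3) h1 (by rw [e]; exact h2)
    simp only [Prod.ext_iff, Prod.fst, Prod.snd, funext_iff] at h
    exact ⟨fun j => by simpa using h.1 j, by simpa using h.2.1, by simpa using h.2.2⟩
  -- generic perturbation principle
  have pert : ∀ (c₁ : V → ℝ) (c₂ c₃ ε : ℝ),
      (∀ δ : ℝ, -ε ≤ δ → δ ≤ ε →
        ((fun j => x j + c₁ j * δ, y + c₂ * δ, w + c₃ * δ) : (V → ℝ) × ℝ × ℝ) ∈ K) →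
      0 < ε → (∀ j, c₁ j = 0) ∧ c₂ = 0 ∧ c₃ = 0 := by
    intro c₁ c₂ c₃ ε hmem hεpos
    have hplus := hmem ε (by linarith) le_rfl
    have hminus : ((fun j => x j + -(c₁ j * ε), y + -(c₂ * ε), w + -(c₃ * ε)) :
        (V → ℝ) × ℝ × ℝ) ∈ K := by
      have h := hmem (-ε) (by linarith) (by linarith)
      have e1 : (fun j => x j + -(c₁ j * ε)) = (fun j => x j + c₁ j * (-ε)) := by
        funext j; ring
      rw [e1, show y + -(c₂ * ε) = y + c₂ * (-ε) by ring,
        show w + -(c₃ * ε) = w + c₃ * (-ε) by ring]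
      exact h
    obtain ⟨e1, e2, e3⟩ := key3 _ _ _ hplus hminus
    refine ⟨fun j => (mul_eq_zero.mp (e1 j)).resolve_right (ne_of_gt hεpos), ?_, ?_⟩
    · exact (mul_eq_zero.mp e2).resolve_right (ne_of_gt hεpos)
    · exact (mul_eq_zero.mp e3).resolve_right (ne_of_gt hεpos)
  -- step 2 : no coordinate strictly between 0 and y
  have step2 : ∀ u, ¬(0 < x u ∧ x u < y) := by
    rintro u ⟨hu0, huy⟩
    rcases lt_or_eq_of_le hy1 with hylt | hyeq
    · -- case y < 1 : move u, y and all coordinates equal to y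
      have hxuy : x u ≠ y := ne_of_lt huy
      have hm_pos : 0 < Finset.univ.inf' Finset.univ_nonempty
          (fun j => if x j = y then 1 else y - x j) := by
        rw [Finset.lt_inf'_iff]
        intro j _
        by_cases h : x j = y
        · simp [h]
        · have hlt := lt_of_le_of_ne (hA j) h
          simp only [if_neg h]
          linarith
      set m : ℝ := Finset.univ.inf' Finset.univ_nonempty
          (fun j => if x j = y then 1 else y - x j) with hm
      have hm_le : ∀ j, x j ≠ y → m ≤ y - x j := by
        intro j hj
        rw [hm]
        have h := Finset.inf'_le (fun j => if x j = y then (1:ℝ) else y - x j)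
          (Finset.mem_univ j)
        rwa [if_neg hj] at h
      set T : Finset V := Finset.univ.filter (fun j => x j = y) with hT
      set t : ℝ := (T.card : ℝ) with ht
      have ht0 : 0 ≤ t := Nat.cast_nonneg _
      set ε : ℝ := (min m (min (min y (1 - y)) (min (x u) (1 - x u)))) / (t + 2) with hε
      have hMpos : 0 < min m (min (min y (1 - y)) (min (x u) (1 - x u))) := by
        refine lt_min hm_pos (lt_min (lt_min ?_ ?_) (lt_min ?_ ?_)) <;> linarith
      have hεpos : 0 < ε := div_pos hMpos (by linarith)
      have hεt : ε * (t + 2) = min m (min (min y (1 - y)) (min (x u) (1 - x u))) := by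
        rw [hε]; exact div_mul_cancel₀ _ (ne_of_gt (by linarith : (0:ℝ) < t + 2))
      have hε1 : ε * (t + 2) ≤ m := by rw [hεt]; exact min_le_left _ _
      have hε2 : ε * (t + 2) ≤ y := by
        rw [hεt]; exact (min_le_right _ _).trans ((min_le_left _ _).trans (min_le_left _ _))
      have hε3 : ε * (t + 2) ≤ 1 - y := by
        rw [hεt]; exact (min_le_right _ _).trans ((min_le_left _ _).trans (min_le_right _ _))
      have hε4 : ε * (t + 2) ≤ x u := by
        rw [hεt]; exact (min_le_right _ _).trans ((min_le_right _ _).trans (min_le_left _ _))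
      have hε5 : ε * (t + 2) ≤ 1 - x u := by
        rw [hεt]; exact (min_le_right _ _).trans ((min_le_right _ _).trans (min_le_right _ _))
      have hsumc : (∑ j, ((if j = u then 1 - t else 0) + (if x j = y then (1:ℝ) else 0))) = 1 := by
        rw [Finset.sum_add_distrib, Finset.sum_ite_eq' Finset.univ u (fun _ => 1 - t),
          Finset.sum_boole, ← hT, ← ht]
        simp only [Finset.mem_univ, if_true]
        ring
      have hmem : ∀ δ : ℝ, -ε ≤ δ → δ ≤ ε →
          ((fun j => x j + ((if j = u then 1 - t else 0) + (if x j = y then 1 else 0)) * δ,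
            y + 1 * δ, w + 0 * δ) : (V → ℝ) × ℝ × ℝ) ∈ K := by
        intro δ hlo hhi
        have htε : 0 ≤ t * (ε + δ) := mul_nonneg ht0 (by linarith)
        have htε' : 0 ≤ t * (ε - δ) := mul_nonneg ht0 (by linarith)
        have htε0 : 0 ≤ t * ε := mul_nonneg ht0 hεpos.le
        refine memK _ _ _ ?_ ?_ ?_ ?_ ?_ ?_
        · intro j
          by_cases hju : j = u
          · subst hju
            simp only [eq_self_iff_true, if_true, if_neg hxuy, add_zero, one_mul]
            linarith [hε1, hm_le j hxuy, htε, htε', htε0, hεpos.le]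
          · by_cases hjy : x j = y
            · simp only [if_neg hju, if_pos hjy, hjy, eq_self_iff_true, if_true, zero_add, one_mul]
              linarith
            · simp only [if_neg hju, if_neg hjy, add_zero, zero_mul, one_mul]
              linarith [hε1, hm_le j hjy, htε, htε', htε0, hεpos.le]
        · simp only [zero_mul, add_zero, one_mul]
          have hs : (∑ j, (x j + ((if j = u then 1 - t else 0) +
              (if x j = y then (1:ℝ) else 0)) * δ)) = (∑ j, x j) + δ := by
            rw [Finset.sum_add_distrib, ← Finset.sum_mul, hsumc, one_mul]
          rw [hs]
          linarith
        · intro j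
          by_cases hju : j = u
          · subst hju
            simp only [eq_self_iff_true, if_true, if_neg hxuy, add_zero]
            constructor
            · linarith [hε4, htε, htε', htε0, hεpos.le]
            · linarith [hε5, htε, htε', htε0, hεpos.le]
          · by_cases hjy : x j = y
            · simp only [if_neg hju, if_pos hjy, hjy, eq_self_iff_true, if_true, zero_add, one_mul]
              constructor
              · linarith [hε2, htε, htε', htε0, hεpos.le]
              · linarith [hε3, htε, htε', htε0, hεpos.le]
            · simp only [if_neg hju, if_neg hjy, add_zero, zero_mul]
              simpa using hC j
        · simp only [one_mul]; linarith [hε2, htε0, hεpos.le]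
        · simp only [one_mul]; linarith [hε3, htε0, hεpos.le]
        · simp only [zero_mul, add_zero]; exact hw0
      have := (pert _ _ _ ε hmem hεpos).2.1
      norm_num at this
    · -- case y = 1
      by_cases hex : ∃ v, v ≠ u ∧ 0 < x v ∧ x v < y
      · -- two strictly fractional coordinates below y : trade mass between them
        obtain ⟨v, hvu, hv0, hvy⟩ := hex
        have huv : u ≠ v := Ne.symm hvu
        set ε := min (min (x u) (y - x u)) (min (x v) (y - x v)) with hε
        have hεpos : 0 < ε := lt_min (lt_min hu0 (by linarith)) (lt_min hv0 (by linarith))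
        have hε1 : ε ≤ x u := (min_le_left _ _).trans (min_le_left _ _)
        have hε2 : ε ≤ y - x u := (min_le_left _ _).trans (min_le_right _ _)
        have hε3 : ε ≤ x v := (min_le_right _ _).trans (min_le_left _ _)
        have hε4 : ε ≤ y - x v := (min_le_right _ _).trans (min_le_right _ _)
        have hsumc : (∑ j, ((if j = u then (1:ℝ) else 0) + (if j = v then (-1:ℝ) else 0))) = 0 := by
          rw [Finset.sum_add_distrib, Finset.sum_ite_eq' Finset.univ u (fun _ => (1:ℝ)),
            Finset.sum_ite_eq' Finset.univ v (fun _ => (-1:ℝ))]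
          simp
        have hmem : ∀ δ : ℝ, -ε ≤ δ → δ ≤ ε →
            ((fun j => x j + ((if j = u then (1:ℝ) else 0) + (if j = v then (-1:ℝ) else 0)) * δ,
              y + 0 * δ, w + 0 * δ) : (V → ℝ) × ℝ × ℝ) ∈ K := by
          intro δ hlo hhi
          refine memK _ _ _ ?_ ?_ ?_ ?_ ?_ ?_
          · intro j
            by_cases hju : j = u
            · subst hju
              simp only [eq_self_iff_true, if_true, if_neg huv, add_zero, one_mul, zero_mul]
              linarith
            · by_cases hjv : j = v
              · subst hjv
                simp only [if_neg hju, eq_self_iff_true, if_true, zero_add, zero_mul, add_zero]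
                linarith
              · simp only [if_neg hju, if_neg hjv, add_zero, zero_mul]
                linarith [hA j]
          · simp only [zero_mul, add_zero]
            have hs : (∑ j, (x j + ((if j = u then (1:ℝ) else 0) +
                (if j = v then (-1:ℝ) else 0)) * δ)) = (∑ j, x j) := by
              rw [Finset.sum_add_distrib, ← Finset.sum_mul, hsumc, zero_mul, add_zero]
            rw [hs]
            linarith
          · intro j
            by_cases hju : j = u
            · subst hju
              simp only [eq_self_iff_true, if_true, if_neg huv, add_zero, one_mul]
              constructor
              · linarith
              · linarith
            · by_cases hjv : j = v
              · subst hjv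
                simp only [if_neg hju, eq_self_iff_true, if_true, zero_add]
                constructor
                · linarith
                · linarith [(hC j).2]
              · simp only [if_neg hju, if_neg hjv, add_zero, zero_mul]
                simpa using hC j
          · simp only [zero_mul, add_zero]; exact hy0
          · simp only [zero_mul, add_zero]; exact hy1
          · simp only [zero_mul, add_zero]; exact hw0
        have := (pert _ _ _ ε hmem hεpos).1 u
        simp [huv] at this
      · -- u is the unique fractional coordinate
        push_neg at hex
        have hint : ∀ v, v ≠ u → x v = 0 ∨ x v = 1 := by
          intro v hv
          rcases le_or_gt (x v) 0 with h | h
          · exact Or.inl (le_antisymm h (hC v).1)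
          · right
            have h2 := hex v hv h
            rw [← hyeq]
            exact le_antisymm (hA v) h2
        rcases lt_or_eq_of_le hB with hSl | hTi
        · -- slack case : move x u alone
          set ε := min (min (x u) (1 - x u)) ((∑ v, x v) - w - y) with hε
          have hεpos : 0 < ε :=
            lt_min (lt_min hu0 (by linarith)) (by linarith)
          have hε1 : ε ≤ x u := (min_le_left _ _).trans (min_le_left _ _)
          have hε2 : ε ≤ 1 - x u := (min_le_left _ _).trans (min_le_right _ _)
          have hε3 : ε ≤ (∑ v, x v) - w - y := min_le_right _ _
          have hsumc : (∑ j, (if j = u then (1:ℝ) else 0)) = 1 := by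
            rw [Finset.sum_ite_eq' Finset.univ u (fun _ => (1:ℝ))]
            simp
          have hmem : ∀ δ : ℝ, -ε ≤ δ → δ ≤ ε →
              ((fun j => x j + (if j = u then (1:ℝ) else 0) * δ,
                y + 0 * δ, w + 0 * δ) : (V → ℝ) × ℝ × ℝ) ∈ K := by
            intro δ hlo hhi
            refine memK _ _ _ ?_ ?_ ?_ ?_ ?_ ?_
            · intro j
              by_cases hju : j = u
              · subst hju
                simp only [eq_self_iff_true, if_true, one_mul, zero_mul, add_zero]
                rw [hyeq]; linarith
              · simp only [if_neg hju, zero_mul, add_zero]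
                linarith [hA j]
            · simp only [zero_mul, add_zero]
              have hs : (∑ j, (x j + (if j = u then (1:ℝ) else 0) * δ))
                  = (∑ j, x j) + δ := by
                rw [Finset.sum_add_distrib, ← Finset.sum_mul, hsumc, one_mul]
              rw [hs]
              linarith
            · intro j
              by_cases hju : j = u
              · subst hju
                simp only [eq_self_iff_true, if_true, one_mul]
                constructor
                · linarith
                · linarith
              · simp only [if_neg hju, zero_mul, add_zero]
                exact hC j
            · simp only [zero_mul, add_zero]; exact hy0
            · simp only [zero_mul, add_zero]; exact hy1
            · simp only [zero_mul, add_zero]; exact hw0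
          have := (pert _ _ _ ε hmem hεpos).1 u
          simp at this
        · -- tight case : move x u and w together ; first show w > 0
          by_cases hall : ∀ j, j ≠ u → x j = 0
          · have hS : (∑ j, x j) = x u :=
              Finset.sum_eq_single u (fun j _ hj => hall j hj)
                (fun h => absurd (Finset.mem_univ u) h)
            rw [hS] at hTi
            linarith
          · push_neg at hall
            obtain ⟨j0, hj0u, hj0⟩ := hall
            have hj1 : x j0 = 1 := (hint j0 hj0u).resolve_left hj0
            have hpair : x u + x j0 ≤ ∑ v, x v := by
              have h := Finset.sum_le_sum_of_subset_of_nonneg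
                (Finset.subset_univ ({u, j0} : Finset V)) (fun i _ _ => (hC i).1)
              rwa [Finset.sum_pair (Ne.symm hj0u)] at h
            have hwpos : 0 < w := by
              rw [hyeq] at hTi
              linarith
            set ε := min (min (x u) (1 - x u)) w with hε
            have hεpos : 0 < ε := lt_min (lt_min hu0 (by linarith)) hwpos
            have hε1 : ε ≤ x u := (min_le_left _ _).trans (min_le_left _ _)
            have hε2 : ε ≤ 1 - x u := (min_le_left _ _).trans (min_le_right _ _)
            have hε3 : ε ≤ w := min_le_right _ _
            have hsumc : (∑ j, (if j = u then (1:ℝ) else 0)) = 1 := by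
              rw [Finset.sum_ite_eq' Finset.univ u (fun _ => (1:ℝ))]
              simp
            have hmem : ∀ δ : ℝ, -ε ≤ δ → δ ≤ ε →
                ((fun j => x j + (if j = u then (1:ℝ) else 0) * δ,
                  y + 0 * δ, w + 1 * δ) : (V → ℝ) × ℝ × ℝ) ∈ K := by
              intro δ hlo hhi
              refine memK _ _ _ ?_ ?_ ?_ ?_ ?_ ?_
              · intro j
                by_cases hju : j = u
                · subst hju
                  simp only [eq_self_iff_true, if_true, one_mul, zero_mul, add_zero]
                  rw [hyeq]; linarith
                · simp only [if_neg hju, zero_mul, add_zero]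
                  linarith [hA j]
              · simp only [zero_mul, add_zero, one_mul]
                have hs : (∑ j, (x j + (if j = u then (1:ℝ) else 0) * δ))
                    = (∑ j, x j) + δ := by
                  rw [Finset.sum_add_distrib, ← Finset.sum_mul, hsumc, one_mul]
                rw [hs]
                linarith
              · intro j
                by_cases hju : j = u
                · subst hju
                  simp only [eq_self_iff_true, if_true, one_mul]
                  constructor
                  · linarith
                  · linarith
                · simp only [if_neg hju, zero_mul, add_zero]
                  exact hC j
              · simp only [zero_mul, add_zero]; exact hy0
              · simp only [zero_mul, add_zero]; exact hy1
              · simp only [one_mul]; linarith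
            have := (pert _ _ _ ε hmem hεpos).2.2
            norm_num at this
  -- step 3 : y is 0 or 1
  have step3 : y = 0 ∨ y = 1 := by
    rcases eq_or_lt_of_le hy0 with h0 | hypos
    · exact Or.inl h0.symm
    rcases eq_or_lt_of_le hy1 with h1 | hylt
    · exact Or.inr h1
    exfalso
    have hall : ∀ j, x j = 0 ∨ x j = y := by
      intro j
      rcases le_or_gt (x j) 0 with h | h
      · exact Or.inl (le_antisymm h (hC j).1)
      · right
        have h2 := step2 j
        have h3 : ¬ x j < y := fun hlt => h2 ⟨h, hlt⟩
        exact le_antisymm (hA j) (not_lt.mp h3)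
    set T : Finset V := Finset.univ.filter (fun j => x j = y) with hT
    set t : ℝ := (T.card : ℝ) with ht
    have ht0 : 0 ≤ t := Nat.cast_nonneg _
    have hSty : (∑ j, x j) = t * y := by
      have he : ∀ j, x j = (if x j = y then (1:ℝ) else 0) * y := by
        intro j
        by_cases hh : x j = y
        · rw [if_pos hh, one_mul]; exact hh
        · rw [if_neg hh, zero_mul]; exact (hall j).resolve_right hh
      rw [Finset.sum_congr rfl (fun j _ => he j), ← Finset.sum_mul, Finset.sum_boole, ← hT, ← ht]
    have hsumc : (∑ j, (if x j = y then (1:ℝ) else 0)) = t := by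
      rw [Finset.sum_boole, ← hT, ← ht]
    rcases Nat.eq_zero_or_pos T.card with hc0 | hc1
    · have ht00 : t = 0 := by rw [ht, hc0]; norm_num
      rw [ht00, zero_mul] at hSty
      rw [hSty] at hB
      linarith
    have ht1 : 1 ≤ t := by
      rw [ht]; exact_mod_cast hc1
    rcases lt_or_eq_of_le hB with hSl | hTi
    · -- slack case : move y and all coordinates equal to y
      set s := (∑ v, x v) - w - y with hs
      have hspos : 0 < s := by rw [hs]; linarith
      set ε := min (min y (1 - y)) (s / (t + 2)) with hε
      have hεpos : 0 < ε :=
        lt_min (lt_min hypos (by linarith)) (div_pos hspos (by linarith))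
      have hεy : ε ≤ y := (min_le_left _ _).trans (min_le_left _ _)
      have hεy1 : ε ≤ 1 - y := (min_le_left _ _).trans (min_le_right _ _)
      have hεs : ε * (t + 2) ≤ s := by
        have h1 : ε ≤ s / (t + 2) := min_le_right _ _
        have h2 : ε * (t + 2) ≤ (s / (t + 2)) * (t + 2) :=
          mul_le_mul_of_nonneg_right h1 (by linarith)
        rwa [div_mul_cancel₀ _ (ne_of_gt (by linarith : (0:ℝ) < t + 2))] at h2
      have hmem : ∀ δ : ℝ, -ε ≤ δ → δ ≤ ε →
          ((fun j => x j + (if x j = y then (1:ℝ) else 0) * δ,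
            y + 1 * δ, w + 0 * δ) : (V → ℝ) × ℝ × ℝ) ∈ K := by
        intro δ hlo hhi
        have htε : 0 ≤ t * (ε + δ) := mul_nonneg ht0 (by linarith)
        have htε' : 0 ≤ t * (ε - δ) := mul_nonneg ht0 (by linarith)
        have htε0 : 0 ≤ t * ε := mul_nonneg ht0 hεpos.le
        refine memK _ _ _ ?_ ?_ ?_ ?_ ?_ ?_
        · intro j
          by_cases hjy : x j = y
          · simp only [if_pos hjy, hjy, eq_self_iff_true, if_true, one_mul]
            linarith
          · have hj0 : x j = 0 := (hall j).resolve_right hjy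
            simp only [if_neg hjy, zero_mul, add_zero, one_mul]
            linarith
        · simp only [zero_mul, add_zero, one_mul]
          have hsum : (∑ j, (x j + (if x j = y then (1:ℝ) else 0) * δ))
              = (∑ j, x j) + t * δ := by
            rw [Finset.sum_add_distrib, ← Finset.sum_mul, hsumc]
          rw [hsum]
          -- need : w - (S + tδ) + (y + δ) ≤ 0 , i.e. δ - tδ ≤ s
          have hkey : δ - t * δ ≤ s := by linarith [hεs, htε, hεpos.le, htε0]
          rw [hs] at hkey
          linarith
        · intro j
          by_cases hjy : x j = y
          · simp only [if_pos hjy, hjy, eq_self_iff_true, if_true, one_mul]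
            constructor
            · linarith
            · linarith
          · have hj0 : x j = 0 := (hall j).resolve_right hjy
            simp only [if_neg hjy, zero_mul, add_zero]
            exact hC j
        · simp only [one_mul]; linarith
        · simp only [one_mul]; linarith
        · simp only [zero_mul, add_zero]; exact hw0
      have := (pert _ _ _ ε hmem hεpos).2.1
      norm_num at this
    · -- tight case : move y , all coordinates equal to y , and w
      set ε := min y (1 - y) with hε
      have hεpos : 0 < ε := lt_min hypos (by linarith)
      have hεy : ε ≤ y := min_le_left _ _
      have hεy1 : ε ≤ 1 - y := min_le_right _ _
      have hmem : ∀ δ : ℝ, -ε ≤ δ → δ ≤ ε →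
          ((fun j => x j + (if x j = y then (1:ℝ) else 0) * δ,
            y + 1 * δ, w + (t - 1) * δ) : (V → ℝ) × ℝ × ℝ) ∈ K := by
        intro δ hlo hhi
        refine memK _ _ _ ?_ ?_ ?_ ?_ ?_ ?_
        · intro j
          by_cases hjy : x j = y
          · simp only [if_pos hjy, hjy, eq_self_iff_true, if_true, one_mul]
            linarith
          · have hj0 : x j = 0 := (hall j).resolve_right hjy
            simp only [if_neg hjy, zero_mul, add_zero, one_mul]
            linarith
        · simp only [one_mul]
          have hsum : (∑ j, (x j + (if x j = y then (1:ℝ) else 0) * δ))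
              = (∑ j, x j) + t * δ := by
            rw [Finset.sum_add_distrib, ← Finset.sum_mul, hsumc]
          rw [hsum]
          linarith
        · intro j
          by_cases hjy : x j = y
          · simp only [if_pos hjy, hjy, eq_self_iff_true, if_true, one_mul]
            constructor
            · linarith
            · linarith
          · have hj0 : x j = 0 := (hall j).resolve_right hjy
            simp only [if_neg hjy, zero_mul, add_zero]
            exact hC j
        · simp only [one_mul]; linarith
        · simp only [one_mul]; linarith
        · -- 0 ≤ w + (t-1) δ  using  w = (t-1) y
          have hw : w = (t - 1) * y := by
            have := hSty
            nlinarith [hTi, hSty]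
          have hprod : 0 ≤ (t - 1) * (y + δ) :=
            mul_nonneg (by linarith) (by linarith)
          nlinarith [hprod, hw]
      have := (pert _ _ _ ε hmem hεpos).2.1
      norm_num at this
  -- x is integral
  have hx : ∀ v, x v = 0 ∨ x v = 1 := by
    intro v
    rcases step3 with h0 | h1
    · left
      have := hA v
      have := (hC v).1
      linarith
    · have h := step2 v
      rcases le_or_gt (x v) 0 with hv | hv
      · left; exact le_antisymm hv (hC v).1
      · right
        have : ¬ x v < y := fun hlt => h ⟨hv, hlt⟩
        push_neg at this
        have := hA v
        linarith
  -- w is S or 0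
  have hwalt : w = 0 ∨ w - (∑ v, x v) + y = 0 := by
    by_contra hc
    push_neg at hc
    obtain ⟨h1, h2⟩ := hc
    have hwpos : 0 < w := lt_of_le_of_ne hw0 (Ne.symm h1)
    have hsl : w - (∑ v, x v) + y < 0 := lt_of_le_of_ne hB h2
    set ε := min w ((∑ v, x v) - w - y) with hε
    have hεpos : 0 < ε := lt_min hwpos (by linarith)
    have hεw : ε ≤ w := min_le_left _ _
    have hεs : ε ≤ (∑ v, x v) - w - y := min_le_right _ _
    have hmem : ∀ δ : ℝ, -ε ≤ δ → δ ≤ ε →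
        ((fun j => x j + (0:ℝ) * δ, y + (0:ℝ) * δ, w + 1 * δ) : (V → ℝ) × ℝ × ℝ) ∈ K := by
      intro δ hlo hhi
      refine memK _ _ _ (fun v => by simpa using hA v) ?_
        (fun v => by simpa using hC v) (by simpa using hy0) (by simpa using hy1) ?_
      · simp only [zero_mul, add_zero, one_mul]; linarith
      · simp only [one_mul]; linarith
    have := (pert _ _ _ ε hmem hεpos).2.2
    norm_num at this
  -- final assembly
  have hsum_nat : ∃ m : ℕ, (∑ v, x v) = (m : ℝ) := by
    have h : ∀ s : Finset V, ∃ m : ℕ, (∑ v ∈ s, x v) = (m : ℝ) := by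
      intro s
      induction s using Finset.induction_on with
      | empty => exact ⟨0, by simp⟩
      | @insert a s ha ih =>
        obtain ⟨m, hm⟩ := ih
        rcases hx a with h0 | h1
        · exact ⟨m, by rw [Finset.sum_insert ha, h0, hm]; simp⟩
        · exact ⟨m + 1, by rw [Finset.sum_insert ha, h1, hm]; push_cast; ring⟩
    exact h Finset.univ
  refine ⟨hx, step3, ?_⟩
  rcases hwalt with hw | hw
  · exact ⟨0, by simpa using hw⟩
  · obtain ⟨m, hm⟩ := hsum_nat
    rcases step3 with h0 | h1
    · refine ⟨m, ?_⟩
      have hweq : w = ∑ v, x v := by rw [h0] at hw; linarith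
      rw [show ((x, y, w) : (V → ℝ) × ℝ × ℝ).2.2 = w from rfl, hweq, hm]
    · have hm1 : 1 ≤ m := by
        have h1' : (1 : ℝ) ≤ (m : ℝ) := by rw [← hm]; linarith
        exact_mod_cast h1'
      refine ⟨m - 1, ?_⟩
      have hcast : ((m - 1 : ℕ) : ℝ) = (m : ℝ) - 1 := by
        push_cast [hm1]; ring
      rw [show ((x, y, w) : (V → ℝ) × ℝ × ℝ).2.2 = w from rfl, hcast, ← hm]
      linarith
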